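/- Let A be a finite-dimensional semisimple ℝ-algebra equipped with a star ring structure such that star is ℝ-linear (StarRing A, StarModule ℝ A), and let φ : A ⊗_ℝ A → A ⊗_ℝ A be the ℝ-linear map determined by φ(a ⊗ b) = (star b) ⊗ (star a). Then there exists a separability idempotent e ∈ A ⊗_ℝ A such that φ(e) = e and (σ ⊗ σ)(e) = e for every star-algebra automorphism σ of A (i.e., every ℝ-algebra automorphism with σ(star a) = star (σ a)). -/

import Mathlib

open scoped TensorProduct

private lemma trace_eq_sum_repr' {A : Type*} [Ring A] [Algebra ℝ A] [FiniteDimensional ℝ A]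
    {ι : Type*} [Fintype ι] [DecidableEq ι]
    (c : Module.Basis ι ℝ A) (f : Module.End ℝ A) :
    LinearMap.trace ℝ A f = ∑ i, c.repr (f (c i)) i := by
  rw [LinearMap.trace_eq_matrix_trace ℝ c f, Matrix.trace]
  simp [Matrix.diag, LinearMap.toMatrix_apply]

/-- A finite-dimensional semisimple real algebra with an `ℝ`-linear star
structure possesses a separability idempotent `e` with `φ e = e` (where
`φ(a ⊗ b) = star b ⊗ star a`) which is invariant under all star-algebra
automorphisms. -/
theorem exists_star_invariant_separability_idempotent
    (A : Type*) [Ring A] [Algebra ℝ A] [FiniteDimensional ℝ A]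
    [IsSemisimpleRing A] [StarRing A] [StarModule ℝ A]
    (φ : A ⊗[ℝ] A →ₗ[ℝ] A ⊗[ℝ] A)
    (hφ : ∀ a b : A, φ (a ⊗ₜ[ℝ] b) = star b ⊗ₜ[ℝ] star a) :
    ∃ e : A ⊗[ℝ] A,
      LinearMap.mul' ℝ A e = 1 ∧
      (∀ a : A, (a ⊗ₜ[ℝ] (1 : A)) * e = e * ((1 : A) ⊗ₜ[ℝ] a)) ∧
      φ e = e ∧
      ∀ σ : A ≃ₐ[ℝ] A, (∀ a : A, σ (star a) = star (σ a)) →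
        TensorProduct.map σ.toLinearMap σ.toLinearMap e = e := by
  classical
  -- `lam a` is the trace of left multiplication by `a`.
  set lam : A →ₗ[ℝ] ℝ := (LinearMap.trace ℝ A) ∘ₗ (LinearMap.mul ℝ A) with hlamdef
  have lam_def : ∀ a : A, lam a = LinearMap.trace ℝ A (LinearMap.mulLeft ℝ a) := by
    intro a
    rfl
  have lam_comm : ∀ a b : A, lam (a * b) = lam (b * a) := by
    intro a b
    rw [lam_def, lam_def, LinearMap.mulLeft_mul, LinearMap.mulLeft_mul,
      ← Module.End.mul_eq_comp, ← Module.End.mul_eq_comp, LinearMap.trace_mul_comm]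
  -- The trace form.
  set B : LinearMap.BilinForm ℝ A := (LinearMap.mul ℝ A).compr₂ lam with hBdef
  have B_def : ∀ a b : A, B a b = lam (a * b) := by
    intro a b; simp [hBdef]
  have B_comm : ∀ a b : A, B a b = B b a := by
    intro a b; rw [B_def, B_def, lam_comm]
  have B_symm : B.IsSymm := by
    exact ⟨fun a b => B_comm a b⟩
  -- Nondegeneracy of the trace form, via semisimplicity.
  have hB : B.Nondegenerate := by
    set K : Ideal A :=
      { carrier := {a | ∀ c : A, lam (a * c) = 0}
        add_mem' := by
          intro x y hx hy c
          simp only [Set.mem_setOf_eq] at *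
          rw [add_mul, map_add, hx c, hy c, add_zero]
        zero_mem' := by intro c; simp
        smul_mem' := by
          intro x a ha c
          simp only [Set.mem_setOf_eq, smul_eq_mul] at *
          calc lam (x * a * c) = lam ((a * c) * x) := by rw [mul_assoc, lam_comm]
          _ = lam (a * (c * x)) := by rw [mul_assoc]
          _ = 0 := ha _ } with hKdef
    obtain ⟨f, hfidem, hKf⟩ := IsSemisimpleRing.ideal_eq_span_idempotent K
    have hfK : f ∈ K := hKf ▸ Ideal.subset_span (Set.mem_singleton f)
    have hf0 : f = 0 := by
      have htr : LinearMap.trace ℝ A (LinearMap.mulLeft ℝ f) = 0 := by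
        rw [← lam_def]
        simpa using hfK 1
      have hproj : LinearMap.IsProj (LinearMap.range (LinearMap.mulLeft ℝ f))
          (LinearMap.mulLeft ℝ f) := by
        constructor
        · intro x; exact LinearMap.mem_range_self _ x
        · rintro x ⟨y, rfl⟩
          show f * (f * y) = f * y
          rw [← mul_assoc, hfidem.eq]
      have htr2 := hproj.trace
      rw [htr] at htr2
      have h0 : Module.finrank ℝ (LinearMap.range (LinearMap.mulLeft ℝ f)) = 0 := by
        exact_mod_cast htr2.symm
      have hbot : LinearMap.range (LinearMap.mulLeft ℝ f) = ⊥ :=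
        Submodule.finrank_eq_zero.mp h0
      have hf : f ∈ LinearMap.range (LinearMap.mulLeft ℝ f) := ⟨1, by simp⟩
      rw [hbot] at hf
      simpa using hf
    suffices hL : B.SeparatingLeft from
      ⟨hL, fun a ha => hL a fun c => by rw [B_comm]; exact ha c⟩
    intro a ha
    have haK : a ∈ K := by
      intro c
      rw [← B_def]
      exact ha c
    rw [hKf, hf0] at haK
    rw [show Ideal.span {(0 : A)} = ⊥ from Submodule.span_zero_singleton A] at haK
    simpa using haK
  -- dual bases for the trace form
  set b : Module.Basis (Fin (Module.finrank ℝ A)) ℝ A := Module.finBasis ℝ A with hbdef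
  set y : Module.Basis (Fin (Module.finrank ℝ A)) ℝ A := B.dualBasis hB b with hydef
  have y_repr : ∀ (x : A) i, y.repr x i = B x (b i) := by
    intro x i
    rw [hydef]
    exact B.dualBasis_repr_apply hB b x i
  have b_repr : ∀ (x : A) i, b.repr x i = B x (y i) := by
    intro x i
    have hby : b = B.dualBasis hB y := by
      rw [hydef, B.dualBasis_dualBasis hB B_symm b]
    conv_lhs => rw [hby]
    exact B.dualBasis_repr_apply hB y x i
  have exp_y : ∀ v : A, ∑ i, B v (b i) • y i = v := by
    intro v
    have h := y.sum_repr v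
    simp only [y_repr] at h
    exact h
  have exp_b : ∀ v : A, ∑ i, B v (y i) • b i = v := by
    intro v
    have h := b.sum_repr v
    simp only [b_repr] at h
    exact h
  -- trace formulas
  have T1 : ∀ f : Module.End ℝ A, LinearMap.trace ℝ A f = ∑ i, B (f (y i)) (b i) := by
    intro f
    rw [trace_eq_sum_repr' y f]
    simp only [y_repr]
  have T2 : ∀ f : Module.End ℝ A, LinearMap.trace ℝ A f = ∑ i, B (f (b i)) (y i) := by
    intro f
    rw [trace_eq_sum_repr' b f]
    simp only [b_repr]
  have lam_eq : ∀ a : A, lam a = ∑ i, lam (a * (y i * b i)) := by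
    intro a
    rw [lam_def, T1 (LinearMap.mulLeft ℝ a)]
    refine Finset.sum_congr rfl fun i _ => ?_
    rw [LinearMap.mulLeft_apply, B_def, mul_assoc]
  -- the candidate element
  set e : A ⊗[ℝ] A := ∑ i, y i ⊗ₜ[ℝ] b i with hedef
  -- uniqueness of the copairing
  have cop : ∀ p q : Fin (Module.finrank ℝ A) → A,
      (∀ w : A, ∑ i, B (p i) w • q i = w) → ∑ i, p i ⊗ₜ[ℝ] q i = e := by
    intro p q h
    have step1 : ∀ i, p i ⊗ₜ[ℝ] q i = ∑ j, B (p i) (b j) • (y j ⊗ₜ[ℝ] q i) := by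
      intro i
      conv_lhs => rw [← exp_y (p i)]
      rw [TensorProduct.sum_tmul]
      refine Finset.sum_congr rfl fun j _ => ?_
      rw [TensorProduct.smul_tmul']
    calc ∑ i, p i ⊗ₜ[ℝ] q i = ∑ i, ∑ j, B (p i) (b j) • (y j ⊗ₜ[ℝ] q i) :=
          Finset.sum_congr rfl fun i _ => step1 i
      _ = ∑ j, ∑ i, B (p i) (b j) • (y j ⊗ₜ[ℝ] q i) := Finset.sum_comm
      _ = ∑ j, y j ⊗ₜ[ℝ] (∑ i, B (p i) (b j) • q i) := by
          refine Finset.sum_congr rfl fun j _ => ?_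
          rw [TensorProduct.tmul_sum]
          refine Finset.sum_congr rfl fun i _ => ?_
          rw [TensorProduct.tmul_smul]
      _ = ∑ j, y j ⊗ₜ[ℝ] b j := by
          refine Finset.sum_congr rfl fun j _ => ?_
          rw [h (b j)]
      _ = e := hedef.symm
  -- the copairing property of `e` itself
  have hyb : ∀ w : A, ∑ i, B (y i) w • b i = w := by
    intro w
    have : ∀ i, B (y i) w = B w (y i) := fun i => B_comm _ _
    simp only [this]
    exact exp_b w
  -- ① multiplication sends `e` to `1`
  have hmul : LinearMap.mul' ℝ A e = 1 := by
    have hz : LinearMap.mul' ℝ A e = ∑ i, y i * b i := by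
      rw [hedef, map_sum]
      refine Finset.sum_congr rfl fun i _ => ?_
      rw [LinearMap.mul'_apply]
    rw [hz]
    have key : ∀ a : A, B a ((∑ i, y i * b i) - 1) = 0 := by
      intro a
      have h1 : B a (∑ i, y i * b i) = lam a := by
        rw [map_sum]
        rw [lam_eq a]
        refine Finset.sum_congr rfl fun i _ => ?_
        rw [B_def]
      have h2 : B a (1 : A) = lam a := by rw [B_def, mul_one]
      rw [map_sub, h1, h2, sub_self]
    have hz0 : (∑ i, y i * b i) - 1 = 0 := by
      refine hB.1 _ fun nn => ?_
      rw [B_comm]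
      exact key nn
    rw [sub_eq_zero] at hz0
    exact hz0
  -- ② the separability property
  have hsep : ∀ a : A, (a ⊗ₜ[ℝ] (1 : A)) * e = e * ((1 : A) ⊗ₜ[ℝ] a) := by
    intro a
    have lhs : (a ⊗ₜ[ℝ] (1 : A)) * e = ∑ i, (a * y i) ⊗ₜ[ℝ] b i := by
      rw [hedef, Finset.mul_sum]
      refine Finset.sum_congr rfl fun i _ => ?_
      rw [Algebra.TensorProduct.tmul_mul_tmul, one_mul]
    have rhs : e * ((1 : A) ⊗ₜ[ℝ] a) = ∑ i, y i ⊗ₜ[ℝ] (b i * a) := by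
      rw [hedef, Finset.sum_mul]
      refine Finset.sum_congr rfl fun i _ => ?_
      rw [Algebra.TensorProduct.tmul_mul_tmul, mul_one]
    rw [lhs, rhs]
    have lhs2 : ∑ i, (a * y i) ⊗ₜ[ℝ] b i
        = ∑ i, ∑ j, B (a * y i) (b j) • (y j ⊗ₜ[ℝ] b i) := by
      refine Finset.sum_congr rfl fun i _ => ?_
      conv_lhs => rw [← exp_y (a * y i)]
      rw [TensorProduct.sum_tmul]
      refine Finset.sum_congr rfl fun j _ => ?_
      rw [TensorProduct.smul_tmul']
    have rhs2 : ∑ i, y i ⊗ₜ[ℝ] (b i * a)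
        = ∑ i, ∑ j, B (b i * a) (y j) • (y i ⊗ₜ[ℝ] b j) := by
      refine Finset.sum_congr rfl fun i _ => ?_
      conv_lhs => rw [← exp_b (b i * a)]
      rw [TensorProduct.tmul_sum]
      refine Finset.sum_congr rfl fun j _ => ?_
      rw [TensorProduct.tmul_smul]
    rw [lhs2, rhs2, Finset.sum_comm]
    refine Finset.sum_congr rfl fun j _ => Finset.sum_congr rfl fun i _ => ?_
    congr 1
    rw [B_def, B_def]
    calc lam (a * y i * b j) = lam ((a * y i) * b j) := by rw [mul_assoc]
      _ = lam (b j * (a * y i)) := lam_comm _ _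
      _ = lam (b j * a * y i) := by rw [mul_assoc]
  -- star is a linear equivalence
  let s : A ≃ₗ[ℝ] A :=
    { toFun := star
      invFun := star
      map_add' := star_add
      map_smul' := fun r x => by simp [star_smul]
      left_inv := star_star
      right_inv := star_star }
  have s_apply : ∀ x : A, s x = star x := fun _ => rfl
  have s_symm_apply : ∀ x : A, s.symm x = star x := fun _ => rfl
  -- the trace of left and right multiplications agree
  have trLR : ∀ c : A, LinearMap.trace ℝ A (LinearMap.mulRight ℝ c)
      = LinearMap.trace ℝ A (LinearMap.mulLeft ℝ c) := by
    intro c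
    rw [T1 (LinearMap.mulRight ℝ c), T2 (LinearMap.mulLeft ℝ c)]
    refine Finset.sum_congr rfl fun i _ => ?_
    rw [LinearMap.mulRight_apply, LinearMap.mulLeft_apply, B_def, B_def]
    rw [lam_comm (c * b i) (y i), mul_assoc]
  have lam_star : ∀ c : A, lam (star c) = lam c := by
    intro c
    have h1 : LinearMap.mulLeft ℝ (star c) = s.conj (LinearMap.mulRight ℝ c) := by
      ext x
      rw [LinearEquiv.conj_apply, LinearMap.comp_apply, LinearMap.comp_apply,
        LinearEquiv.coe_coe, LinearEquiv.coe_coe, s_apply, s_symm_apply,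
        LinearMap.mulRight_apply, LinearMap.mulLeft_apply, star_mul, star_star]
    rw [lam_def, h1, LinearMap.trace_conj', trLR, ← lam_def]
  have B_star : ∀ u v : A, B (star u) (star v) = B v u := by
    intro u v
    rw [B_def, ← star_mul, lam_star, B_def]
  -- ③ invariance under φ
  have hphi : φ e = e := by
    rw [hedef, map_sum]
    have : ∀ i, φ (y i ⊗ₜ[ℝ] b i) = star (b i) ⊗ₜ[ℝ] star (y i) := fun i => hφ _ _
    simp only [this]
    refine cop (fun i => star (b i)) (fun i => star (y i)) fun w => ?_
    have hw : w = star (star w) := (star_star w).symm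
    conv_lhs => rw [hw]
    calc ∑ i, B (star (b i)) (star (star w)) • star (y i)
        = ∑ i, star (B (star w) (b i) • y i) := by
          refine Finset.sum_congr rfl fun i _ => ?_
          rw [B_star, star_smul, star_trivial (B (star w) (b i))]
      _ = star (∑ i, B (star w) (b i) • y i) := (star_sum _ _).symm
      _ = star (star w) := by rw [exp_y (star w)]
      _ = w := star_star w
  -- ④ invariance under algebra automorphisms
  have hsigma : ∀ σ : A ≃ₐ[ℝ] A,
      TensorProduct.map σ.toLinearMap σ.toLinearMap e = e := by
    intro σ
    have lam_sigma : ∀ c : A, lam (σ c) = lam c := by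
      intro c
      have h1 : LinearMap.mulLeft ℝ (σ c) = σ.toLinearEquiv.conj (LinearMap.mulLeft ℝ c) := by
        ext x
        rw [LinearEquiv.conj_apply, LinearMap.comp_apply, LinearMap.comp_apply,
          LinearEquiv.coe_coe, LinearEquiv.coe_coe, LinearMap.mulLeft_apply,
          LinearMap.mulLeft_apply]
        show σ c * x = σ (c * σ.symm x)
        rw [map_mul, AlgEquiv.apply_symm_apply]
      rw [lam_def, h1, LinearMap.trace_conj', ← lam_def]
    have B_sigma : ∀ u v : A, B (σ u) (σ v) = B u v := by
      intro u v
      rw [B_def, ← map_mul, lam_sigma, B_def]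
    rw [hedef, map_sum]
    have : ∀ i, TensorProduct.map σ.toLinearMap σ.toLinearMap (y i ⊗ₜ[ℝ] b i)
        = σ (y i) ⊗ₜ[ℝ] σ (b i) := by
      intro i
      rw [TensorProduct.map_tmul, AlgEquiv.toLinearMap_apply, AlgEquiv.toLinearMap_apply]
    simp only [this]
    refine cop (fun i => σ (y i)) (fun i => σ (b i)) fun w => ?_
    have hw : w = σ (σ.symm w) := (σ.apply_symm_apply w).symm
    conv_lhs => rw [hw]
    calc ∑ i, B (σ (y i)) (σ (σ.symm w)) • σ (b i)
        = ∑ i, σ (B (y i) (σ.symm w) • b i) := by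
          refine Finset.sum_congr rfl fun i _ => ?_
          rw [B_sigma, map_smul]
      _ = σ (∑ i, B (y i) (σ.symm w) • b i) := (map_sum σ _ _).symm
      _ = σ (σ.symm w) := by rw [hyb (σ.symm w)]
      _ = w := σ.apply_symm_apply w
  exact ⟨e, hmul, hsep, hphi, fun σ _ => hsigma σ⟩
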